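/- Let A be an N×N matrix with complex entries such that the trace of A^k is a real number (has zero imaginary part) for every k with 1 ≤ k ≤ N. Then the determinant of A is a real number (has zero imaginary part). -/

import Mathlib

set_option maxHeartbeats 1000000
open Polynomial


lemma charmatrix_smul_one_add {m R : Type*} [Fintype m] [DecidableEq m] [CommRing R]
    (μ : R) (M : Matrix m m R) :
    (μ • (1 : Matrix m m R) + M).charmatrix
      = M.charmatrix.map (aeval (X - C μ) : R[X] →ₐ[R] R[X]) := by
  ext i j
  by_cases hij : i = j
  · subst hij
    simp [Matrix.charmatrix_apply_eq, Matrix.map_apply, Matrix.add_apply,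
      Matrix.smul_apply, Matrix.one_apply, map_sub, aeval_X, aeval_C]
    ring
  · simp [Matrix.charmatrix_apply_ne _ _ _ hij, Matrix.map_apply, Matrix.add_apply,
      Matrix.smul_apply, Matrix.one_apply_ne hij, hij, aeval_C]

lemma charpoly_smul_one_add {m R : Type*} [Fintype m] [DecidableEq m] [CommRing R]
    (μ : R) (M : Matrix m m R) :
    (μ • (1 : Matrix m m R) + M).charpoly = aeval (X - C μ) M.charpoly := by
  rw [Matrix.charpoly, charmatrix_smul_one_add]
  rw [show M.charmatrix.map (aeval (X - C μ) : R[X] →ₐ[R] R[X])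
      = ((aeval (X - C μ) : R[X] →ₐ[R] R[X]) : R[X] →+* R[X]).mapMatrix M.charmatrix from rfl]
  rw [← RingHom.map_det]
  rfl

lemma charpoly_of_isNilpotent_sub {W : Type*} [AddCommGroup W] [Module ℂ W]
    [Module.Finite ℂ W] [Module.Free ℂ W] (g : Module.End ℂ W) (μ : ℂ)
    (hn : IsNilpotent (g - algebraMap ℂ (Module.End ℂ W) μ)) :
    g.charpoly = (X - C μ) ^ (Module.finrank ℂ W) := by
  have h1 : (g - algebraMap ℂ (Module.End ℂ W) μ).charpoly = X ^ (Module.finrank ℂ W) :=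
    IsNilpotent.charpoly_eq_X_pow_finrank hn
  let b := Module.Free.chooseBasis ℂ W
  have h2 : LinearMap.toMatrix b b g
      = μ • (1 : Matrix _ _ ℂ) + LinearMap.toMatrix b b (g - algebraMap ℂ (Module.End ℂ W) μ) := by
    rw [map_sub, LinearMap.toMatrix_algebraMap]
    simp only [Matrix.scalar_apply, Matrix.smul_one_eq_diagonal]
    abel
  rw [← LinearMap.charpoly_toMatrix g b, h2, charpoly_smul_one_add,
    LinearMap.charpoly_toMatrix, h1]
  simp

lemma trace_pow_of_isNilpotent_sub {W : Type*} [AddCommGroup W] [Module ℂ W]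
    [Module.Finite ℂ W] [Module.Free ℂ W] (g : Module.End ℂ W) (μ : ℂ)
    (hn : IsNilpotent (g - algebraMap ℂ (Module.End ℂ W) μ)) (k : ℕ) :
    LinearMap.trace ℂ W (g ^ k) = μ ^ k * (Module.finrank ℂ W : ℂ) := by
  induction k with
  | zero => simp [LinearMap.trace_one]
  | succ k ih =>
    rw [pow_succ, Module.End.mul_eq_comp,
      LinearMap.trace_comp_eq_mul_of_commute_of_isNilpotent μ ((Commute.refl g).pow_left k) hn,
      ih]
    ring

lemma end_decomp {V : Type} [AddCommGroup V] [Module ℂ V] [FiniteDimensional ℂ V]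
    (f : Module.End ℂ V) :
    ∃ (ι : Type) (_ : Fintype ι) (μs : ι → ℂ) (d : ι → ℕ),
      f.charpoly = ∏ i, (X - C (μs i)) ^ (d i) ∧
      ∀ k : ℕ, LinearMap.trace ℂ V (f ^ k) = ∑ i, (d i : ℂ) * μs i ^ k := by
  classical
  have hInd := f.independent_maxGenEigenspace
  have hTop := Module.End.iSup_maxGenEigenspace_eq_top f
  have h_fin : {μ : ℂ | f.maxGenEigenspace μ ≠ ⊥}.Finite :=
    WellFoundedGT.finite_ne_bot_of_iSupIndep hInd
  let ι := {μ : ℂ // f.maxGenEigenspace μ ≠ ⊥}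
  have : Fintype ι := h_fin.fintype
  have hds : DirectSum.IsInternal (fun μ : ι => f.maxGenEigenspace μ.1) :=
    DirectSum.isInternal_ne_bot_iff.mpr
      (DirectSum.isInternal_submodule_of_iSupIndep_of_iSup_eq_top hInd hTop)
  -- maps-to facts
  have hmt : ∀ μ : ι, ∀ x ∈ f.maxGenEigenspace μ.1, f x ∈ f.maxGenEigenspace μ.1 :=
    fun μ => Module.End.mapsTo_maxGenEigenspace_of_comm rfl μ.1
  have hmtk : ∀ (k : ℕ) (μ : ι), Set.MapsTo (f ^ k) (f.maxGenEigenspace μ.1)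
      (f.maxGenEigenspace μ.1) :=
    fun k μ => Module.End.mapsTo_maxGenEigenspace_of_comm ((Commute.refl f).pow_right k) μ.1
  -- the restrictions
  set g : ∀ μ : ι, Module.End ℂ (f.maxGenEigenspace μ.1) :=
    fun μ => f.restrict (hmt μ) with hg
  have hnil : ∀ μ : ι,
      IsNilpotent (g μ - algebraMap ℂ (Module.End ℂ (f.maxGenEigenspace μ.1)) μ.1) := by
    intro μ
    have h0 := f.isNilpotent_restrict_maxGenEigenspace_sub_algebraMap μ.1
    exact h0
  refine ⟨ι, this, fun μ => μ.1, fun μ => Module.finrank ℂ (f.maxGenEigenspace μ.1), ?_, ?_⟩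
  · -- charpoly
    let κ : ι → Type := fun μ => Module.Free.ChooseBasisIndex ℂ (f.maxGenEigenspace μ.1)
    let b : ∀ μ : ι, Module.Basis (κ μ) ℂ (f.maxGenEigenspace μ.1) :=
      fun μ => Module.Free.chooseBasis ℂ _
    let B := hds.collectedBasis b
    have hBM : LinearMap.toMatrix B B f
        = Matrix.blockDiagonal' fun μ : ι => LinearMap.toMatrix (b μ) (b μ) (g μ) :=
      LinearMap.toMatrix_directSum_collectedBasis_eq_blockDiagonal' hds hds b b
        (fun μ => hmt μ)
    letI : LinearOrder ι := LinearOrder.lift' (fun μ => (Fintype.equivFin ι) μ)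
      (Fintype.equivFin ι).injective
    have hne : ∀ μ : ι, Nonempty (κ μ) := by
      intro μ
      have : Nontrivial (f.maxGenEigenspace μ.1) :=
        Submodule.nontrivial_iff_ne_bot.mpr μ.2
      infer_instance
    have himg : Finset.image (Sigma.fst : (Σ μ : ι, κ μ) → ι) Finset.univ = Finset.univ := by
      apply Finset.eq_univ_of_forall
      intro μ
      obtain ⟨y⟩ := hne μ
      exact Finset.mem_image.mpr ⟨⟨μ, y⟩, Finset.mem_univ _, rfl⟩
    have hsq : ∀ μ : ι,
        ((Matrix.blockDiagonal' fun ν : ι => LinearMap.toMatrix (b ν) (b ν) (g ν)).toSquareBlock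
          Sigma.fst μ).charpoly = (LinearMap.toMatrix (b μ) (b μ) (g μ)).charpoly := by
      intro μ
      let e : κ μ ≃ {x : Σ ν : ι, κ ν // x.fst = μ} :=
        { toFun := fun y => ⟨⟨μ, y⟩, rfl⟩
          invFun := fun x => (congrArg κ x.2).mp x.1.2
          left_inv := fun y => rfl
          right_inv := by rintro ⟨⟨ν, y⟩, rfl⟩; rfl }
      have : (Matrix.blockDiagonal' fun ν : ι => LinearMap.toMatrix (b ν) (b ν) (g ν)).toSquareBlock
          Sigma.fst μ = Matrix.reindex e e (LinearMap.toMatrix (b μ) (b μ) (g μ)) := by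
        ext i j
        obtain ⟨⟨ν₁, y₁⟩, h₁⟩ := i
        obtain ⟨⟨ν₂, y₂⟩, h₂⟩ := j
        dsimp only at h₁ h₂
        subst h₁; subst h₂
        simp [Matrix.toSquareBlock_def, Matrix.reindex_apply, Matrix.submatrix_apply,
          Matrix.blockDiagonal'_apply_eq, eq_mp_eq_cast, e]
      rw [this, Matrix.charpoly_reindex]
    have hbt := (Matrix.blockTriangular_blockDiagonal'
      (fun ν : ι => LinearMap.toMatrix (b ν) (b ν) (g ν))).charpoly
    rw [← LinearMap.charpoly_toMatrix f B, hBM, hbt]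
    refine Finset.prod_congr (Finset.eq_univ_of_forall fun μ => ?_) (fun μ _ => ?_)
    · obtain ⟨y⟩ := hne μ
      simp only [Finset.mem_image]
      exact ⟨⟨μ, y⟩, Finset.mem_univ _, rfl⟩
    · have hfin : ((LinearMap.toMatrix (b μ) (b μ)) (g μ)).charpoly
          = (X - C μ.1) ^ (Module.finrank ℂ (f.maxGenEigenspace μ.1)) := by
        rw [LinearMap.charpoly_toMatrix]
        exact charpoly_of_isNilpotent_sub (g μ) μ.1 (hnil μ)
      have h := (hsq μ).trans hfin
      convert h using 2
  · -- trace
    intro k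
    have := LinearMap.trace_eq_sum_trace_restrict hds (fun μ : ι => hmtk k μ)
    rw [this]
    refine Finset.sum_congr rfl fun μ _ => ?_
    have hrestr : (f ^ k).restrict (hmtk k μ) = (g μ) ^ k := by
      rw [hg]
      exact (Module.End.pow_restrict k (hmt μ)).symm
    rw [hrestr, trace_pow_of_isNilpotent_sub (g μ) μ.1 (hnil μ) k]
    ring


lemma esymm_conj_fixed {σ : Type} [Fintype σ] (x : σ → ℂ)
    (hP : ∀ k : ℕ, 1 ≤ k → k ≤ Fintype.card σ →
      (starRingEnd ℂ) (∑ i, x i ^ k) = ∑ i, x i ^ k) :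
    ∀ j ≤ Fintype.card σ,
      (starRingEnd ℂ) (MvPolynomial.aeval x (MvPolynomial.esymm σ ℂ j))
        = MvPolynomial.aeval x (MvPolynomial.esymm σ ℂ j) := by
  intro j
  induction j using Nat.strong_induction_on with
  | _ j ih =>
    intro hj
    rcases Nat.eq_zero_or_pos j with hj0 | hj1
    · subst hj0
      simp [MvPolynomial.esymm_zero]
    · have key := congrArg (MvPolynomial.aeval x) (MvPolynomial.mul_esymm_eq_sum σ ℂ j)
      simp only [map_mul, map_sum, map_pow, map_neg, map_one, map_natCast,
        MvPolynomial.psum, MvPolynomial.aeval_X] at key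
      have hconj := congrArg (starRingEnd ℂ) key
      rw [map_mul, map_natCast] at hconj
      have hR : (starRingEnd ℂ) ((-1 : ℂ) ^ (j + 1) *
          ∑ a ∈ Finset.filter (fun a => a.1 < j) (Finset.HasAntidiagonal.antidiagonal j),
            (-1 : ℂ) ^ a.1 * MvPolynomial.aeval x (MvPolynomial.esymm σ ℂ a.1)
              * ∑ i, x i ^ a.2)
          = (-1 : ℂ) ^ (j + 1) *
          ∑ a ∈ Finset.filter (fun a => a.1 < j) (Finset.HasAntidiagonal.antidiagonal j),
            (-1 : ℂ) ^ a.1 * MvPolynomial.aeval x (MvPolynomial.esymm σ ℂ a.1)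
              * ∑ i, x i ^ a.2 := by
        rw [map_mul, map_pow, map_neg, map_one, map_sum]
        congr 1
        refine Finset.sum_congr rfl fun a ha => ?_
        obtain ⟨hmem, hlt⟩ := Finset.mem_filter.mp ha
        have hab : a.1 + a.2 = j := Finset.HasAntidiagonal.mem_antidiagonal.mp hmem
        have ha2 : 1 ≤ a.2 := by omega
        have ha2' : a.2 ≤ Fintype.card σ := by omega
        rw [map_mul, map_mul, map_pow, map_neg, map_one,
          ih a.1 hlt (by omega), hP a.2 ha2 ha2']
      rw [hR, ← key] at hconj
      have hj0 : (j : ℂ) ≠ 0 := Nat.cast_ne_zero.mpr (by omega)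
      exact mul_left_cancel₀ hj0 hconj

theorem stmt_18 {N : ℕ} (A : Matrix (Fin N) (Fin N) ℂ)
    (h : ∀ k : ℕ, 1 ≤ k → k ≤ N → (Matrix.trace (A ^ k)).im = 0) :
    (Matrix.det A).im = 0 := by
  classical
  obtain ⟨ι, hι, μs, d, hchar, htr⟩ :=
    end_decomp (Matrix.toLinAlgEquiv' A : Module.End ℂ (Fin N → ℂ))
  have hcharA : A.charpoly = ∏ i, (X - C (μs i)) ^ d i := by
    rw [← hchar, ← LinearMap.charpoly_toMatrix _ (Pi.basisFun ℂ (Fin N)),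
      LinearMap.toMatrix_eq_toMatrix']
    congr 1
    exact (LinearMap.toMatrix'_toLin' A).symm
  have htrace : ∀ (M : Matrix (Fin N) (Fin N) ℂ),
      LinearMap.trace ℂ (Fin N → ℂ) (Matrix.toLinAlgEquiv' M) = M.trace := by
    intro M
    rw [LinearMap.trace_eq_matrix_trace ℂ (Pi.basisFun ℂ (Fin N)),
      LinearMap.toMatrix_eq_toMatrix']
    congr 1
    exact LinearMap.toMatrix'_toLin' M
  have htrA : ∀ k : ℕ, (A ^ k).trace = ∑ i, (d i : ℂ) * μs i ^ k := by
    intro k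
    rw [← htrace (A ^ k), map_pow]
    exact htr k
  have hdeg : ∑ i, d i = N := by
    have h1 : A.charpoly.natDegree = N := by
      rw [Matrix.charpoly_natDegree_eq_dim, Fintype.card_fin]
    rw [hcharA, Polynomial.natDegree_prod_of_monic _ _
      (fun i _ => (monic_X_sub_C (μs i)).pow _)] at h1
    simpa [Polynomial.natDegree_pow, Polynomial.natDegree_X_sub_C] using h1
  have hdet : A.det = ∏ i, μs i ^ d i := by
    rw [Matrix.det_eq_sign_charpoly_coeff, hcharA, Polynomial.coeff_zero_eq_eval_zero]
    rw [Polynomial.eval_prod]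
    simp only [Polynomial.eval_pow, Polynomial.eval_sub, Polynomial.eval_X, Polynomial.eval_C,
      zero_sub]
    have : ∀ i : ι, (-μs i) ^ d i = (-1 : ℂ) ^ d i * μs i ^ d i := by
      intro i; rw [neg_pow]
    rw [Finset.prod_congr rfl fun i _ => this i, Finset.prod_mul_distrib,
      Finset.prod_pow_eq_pow_sum, hdeg, Fintype.card_fin, ← mul_assoc, ← pow_add]
    simp [Even.neg_one_pow ⟨N, rfl⟩]
  -- Newton's identities part
  let σ := Σ i : ι, Fin (d i)
  have hcard : Fintype.card σ = N := by
    simp only [σ, Fintype.card_sigma, Fintype.card_fin]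
    exact hdeg
  let x : σ → ℂ := fun p => μs p.1
  have hsum : ∀ k : ℕ, ∑ p : σ, x p ^ k = ∑ i, (d i : ℂ) * μs i ^ k := by
    intro k
    rw [← Finset.univ_sigma_univ, Finset.sum_sigma]
    refine Finset.sum_congr rfl fun i _ => ?_
    simp [x, Finset.sum_const, nsmul_eq_mul]
  have hprod : ∏ p : σ, x p = ∏ i, μs i ^ d i := by
    rw [← Finset.univ_sigma_univ, Finset.prod_sigma]
    refine Finset.prod_congr rfl fun i _ => ?_
    simp [x, Finset.prod_const]
  have hP : ∀ k : ℕ, 1 ≤ k → k ≤ Fintype.card σ →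
      (starRingEnd ℂ) (∑ p, x p ^ k) = ∑ p, x p ^ k := by
    intro k h1 h2
    rw [hsum k, ← htrA k]
    exact Complex.conj_eq_iff_im.mpr (h k h1 (hcard ▸ h2))
  have hfinal := esymm_conj_fixed x hP (Fintype.card σ) le_rfl
  have hE : MvPolynomial.aeval x (MvPolynomial.esymm σ ℂ (Fintype.card σ)) = ∏ p : σ, x p := by
    rw [MvPolynomial.esymm, ← Finset.card_univ, Finset.powersetCard_self]
    simp
  rw [hE, hprod, ← hdet] at hfinal
  exact Complex.conj_eq_iff_im.mp hfinal
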